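/- Let p be a prime, r ≥ 1, G_r = Z/p^r Z, a ∈ G_r nonzero with p^{r−1} | a, and set k = p^r − 2. Fix b ∈ G_r with p ∤ b, and let n be the least nonnegative integer with n ≡ a·b^{−1} − 1 (mod p^r). Then the multiset consisting of n copies of b and k − n copies of −b has the property that no subset of it sums to a. -/

import Mathlib

/-- The multiset 𝔐_{p,r,a}(b) with n copies of b and (p^r − 2 − n) copies of −b,
where n is the least nonnegative residue of a·b⁻¹ − 1 mod p^r, avoids a. -/
theorem stmt_4 (p : ℕ) (hp : p.Prime) (r : ℕ) (hr : 1 ≤ r)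
    (a : ZMod (p ^ r)) (ha : a ≠ 0)
    (hdvd : ∃ c : ZMod (p ^ r), a = (p : ZMod (p ^ r)) ^ (r - 1) * c)
    (b : (ZMod (p ^ r))ˣ) :
    ∀ S ≤ Multiset.replicate ((a * (↑b⁻¹ : ZMod (p ^ r)) - 1).val) (b : ZMod (p ^ r)) +
        Multiset.replicate (p ^ r - 2 - (a * (↑b⁻¹ : ZMod (p ^ r)) - 1).val)
          (-(b : ZMod (p ^ r))),
      S.sum ≠ a := by
  intro S hS hsum
  have hN2 : 2 ≤ p ^ r := by
    calc 2 ≤ p := hp.two_le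
    _ ≤ p ^ r := Nat.le_self_pow (by omega) p
  haveI : NeZero (p ^ r) := ⟨by omega⟩
  set x : ZMod (p ^ r) := a * (↑b⁻¹ : ZMod (p ^ r)) with hx
  set n := (x - 1).val with hn
  have hinvmul : (↑b⁻¹ : ZMod (p ^ r)) * ↑b = 1 := by
    rw [← Units.val_mul, inv_mul_cancel, Units.val_one]
  have hxne : x ≠ 0 := by
    intro h
    apply ha
    have h2 : x * ↑b = 0 := by rw [h, zero_mul]
    rw [hx, mul_assoc, hinvmul, mul_one] at h2
    exact h2
  have hnlt : n < p ^ r := ZMod.val_lt _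
  have hxval : ((n : ℕ) : ZMod (p ^ r)) = x - 1 := by
    rw [hn, ZMod.natCast_val, ZMod.cast_id]
  have hnne : n ≠ p ^ r - 1 := by
    intro h
    apply hxne
    rw [h] at hxval
    have h2 : ((p ^ r - 1 : ℕ) : ZMod (p ^ r)) = -1 := by
      rw [Nat.cast_sub (by omega : 1 ≤ p ^ r), ZMod.natCast_self]
      ring
    rw [h2] at hxval
    linear_combination -hxval
  have hnle : n ≤ p ^ r - 2 := by omega
  set A := Multiset.replicate n (b : ZMod (p ^ r)) with hA
  set B := Multiset.replicate (p ^ r - 2 - n) (-(b : ZMod (p ^ r))) with hB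
  have hS1 : S ∩ A ≤ A := Multiset.inter_le_right
  have hS2 : S - A ≤ B := by
    rw [Multiset.sub_le_iff_le_add]
    exact hS.trans (le_of_eq (add_comm A B))
  obtain ⟨i, hi, hiS⟩ := Multiset.le_replicate_iff.mp hS1
  obtain ⟨j, hj, hjS⟩ := Multiset.le_replicate_iff.mp hS2
  have hdecomp : (S - A) + S ∩ A = S := Multiset.sub_add_inter S A
  have hsum' : ((i : ZMod (p ^ r)) - j) * ↑b = a := by
    rw [← hdecomp, Multiset.sum_add, hiS, hjS, Multiset.sum_replicate,
      Multiset.sum_replicate, nsmul_eq_mul, nsmul_eq_mul] at hsum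
    linear_combination hsum
  have key : ((i : ZMod (p ^ r)) - j) = (n : ZMod (p ^ r)) + 1 := by
    have h1 : ((i : ZMod (p ^ r)) - j) * (↑b * (↑b⁻¹ : ZMod (p ^ r))) = a * ↑b⁻¹ := by
      rw [← mul_assoc, hsum']
    rw [mul_comm (b : ZMod (p ^ r)), hinvmul, mul_one] at h1
    rw [h1, ← hx, hxval]; ring
  have hdvd2 : ((p ^ r : ℕ) : ℤ) ∣ ((i : ℤ) - j - (n + 1)) := by
    have h0 : (((i : ℤ) - j - (n + 1) : ℤ) : ZMod (p ^ r)) = 0 := by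
      push_cast
      rw [sub_eq_zero]
      exact_mod_cast key
    exact_mod_cast (ZMod.intCast_zmod_eq_zero_iff_dvd _ _).mp h0
  have hiZ : (i : ℤ) ≤ n := by exact_mod_cast hi
  have hjZ : (j : ℤ) ≤ ((p ^ r : ℕ) : ℤ) - 2 - n := by
    have h3 : (j : ℤ) ≤ ((p ^ r - 2 - n : ℕ) : ℤ) := by exact_mod_cast hj
    have h4 : ((p ^ r - 2 - n : ℕ) : ℤ) = ((p ^ r : ℕ) : ℤ) - 2 - n := by
      push_cast [Nat.cast_sub (by omega : n ≤ p ^ r - 2),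
        Nat.cast_sub (by omega : 2 ≤ p ^ r)]
      ring
    omega
  have hjpos : 0 ≤ (j : ℤ) := Int.natCast_nonneg j
  have hipos : 0 ≤ (i : ℤ) := Int.natCast_nonneg i
  have hNZ : (2 : ℤ) ≤ ((p ^ r : ℕ) : ℤ) := by exact_mod_cast hN2
  have := Int.eq_zero_of_abs_lt_dvd hdvd2 (by rw [abs_lt]; constructor <;> omega)
  omega
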